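/- Let n ≥ 2. Every unitary n×n complex matrix A with det A = 1 is a product of an even number of simple symmetries, where a simple symmetry is a unitary matrix of the form I - 2P with P a rank-one orthogonal projection. Consequently, any group homomorphism χ : Uₙ(ℂ) → S¹ that takes the same value on all simple symmetries and values in {1, -1} on them satisfies χ(A) = 1 for all A ∈ SUₙ(ℂ). -/

import Mathlib

/-- `S` is a simple symmetry: a unitary matrix of the form `I - 2P` with `P` a rank-one
orthogonal (Hermitian idempotent) projection. -/
def IsSimpleSymmetry {n : ℕ} (S : Matrix.unitaryGroup (Fin n) ℂ) : Prop :=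
  ∃ P : Matrix (Fin n) (Fin n) ℂ,
    P.IsHermitian ∧ P * P = P ∧ P.rank = 1 ∧
      (S : Matrix (Fin n) (Fin n) ℂ) = 1 - 2 • P

open Matrix

namespace SS12

variable {n : ℕ}

/-- rank-one projection onto the line spanned by `u`. -/
noncomputable def proj (u : Fin n → ℂ) : Matrix (Fin n) (Fin n) ℂ :=
  vecMulVec u (star u)

/-- reflection through the hyperplane orthogonal to `u`. -/
noncomputable def ref (u : Fin n → ℂ) : Matrix (Fin n) (Fin n) ℂ :=
  1 - 2 • proj u

lemma star_single (i : Fin n) (c : ℂ) :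
    star (Pi.single i c : Fin n → ℂ) = Pi.single i (star c) := by
  funext j
  by_cases h : j = i
  · subst h; simp
  · simp [Pi.single_eq_of_ne h]

lemma star_dot (x z : Fin n → ℂ) : star z ⬝ᵥ x = star (star x ⬝ᵥ z) := by
  simp only [dotProduct, star_sum, star_mul', star_star, Pi.star_apply]
  exact Finset.sum_congr rfl fun i _ => mul_comm _ _

lemma proj_herm (u : Fin n → ℂ) : (proj u).IsHermitian := by
  unfold Matrix.IsHermitian proj
  ext i j
  simp [vecMulVec_apply, conjTranspose_apply, mul_comm]

lemma proj_mulVec (u x : Fin n → ℂ) : (proj u).mulVec x = (star u ⬝ᵥ x) • u := by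
  funext i
  simp only [proj, mulVec, dotProduct, vecMulVec_apply, Pi.smul_apply, smul_eq_mul,
    Finset.sum_mul, Finset.mul_sum, Pi.star_apply]
  exact Finset.sum_congr rfl fun j _ => by ring

lemma proj_idem (u : Fin n → ℂ) (hu : star u ⬝ᵥ u = 1) : proj u * proj u = proj u := by
  ext i j
  simp only [proj, Matrix.mul_apply, vecMulVec_apply, Pi.star_apply]
  have : ∀ k, u i * star (u k) * (u k * star (u j))
      = (u i * star (u j)) * (star (u k) * u k) := fun k => by ring
  rw [Finset.sum_congr rfl fun k _ => this k, ← Finset.mul_sum]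
  have hu' : ∑ k, star (u k) * u k = 1 := by
    simpa [dotProduct, Pi.star_apply] using hu
  rw [hu', mul_one]

lemma ref_herm (u : Fin n → ℂ) : (ref u).conjTranspose = ref u := by
  have h := proj_herm u
  unfold Matrix.IsHermitian at h
  simp only [ref, conjTranspose_sub, conjTranspose_one, conjTranspose_nsmul, h]

lemma ref_mul_ref (u : Fin n → ℂ) (hu : star u ⬝ᵥ u = 1) : ref u * ref u = 1 := by
  have hQ : ((2:ℕ) • proj u) * ((2:ℕ) • proj u) = (2:ℕ) • proj u + (2:ℕ) • proj u := by
    rw [smul_mul_assoc, mul_smul_comm, proj_idem u hu, ← two_smul ℕ ((2:ℕ) • proj u)]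
  simp only [ref, sub_mul, mul_sub, mul_one, one_mul, hQ]
  abel

lemma ref_mem (u : Fin n → ℂ) (hu : star u ⬝ᵥ u = 1) :
    ref u ∈ Matrix.unitaryGroup (Fin n) ℂ := by
  rw [Matrix.mem_unitaryGroup_iff]
  have : star (ref u) = ref u := ref_herm u
  rw [this]
  exact ref_mul_ref u hu

lemma ref_mulVec (u x : Fin n → ℂ) :
    (ref u).mulVec x = x - (2 * (star u ⬝ᵥ x)) • u := by
  have h2 : (2 : ℕ) • proj u = proj u + proj u := two_smul _ _
  simp only [ref, h2, Matrix.sub_mulVec, Matrix.add_mulVec, Matrix.one_mulVec, proj_mulVec]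
  funext i
  simp only [Pi.sub_apply, Pi.smul_apply, smul_eq_mul, two_mul, add_smul]

lemma ref_fix (u x : Fin n → ℂ) (h : star u ⬝ᵥ x = 0) : (ref u).mulVec x = x := by
  rw [ref_mulVec, h, mul_zero, zero_smul, sub_zero]

lemma u_ne_zero {u : Fin n → ℂ} (hu : star u ⬝ᵥ u = 1) : u ≠ 0 := by
  intro h
  rw [h] at hu
  simp at hu

lemma proj_rank (u : Fin n → ℂ) (hu : star u ⬝ᵥ u = 1) : (proj u).rank = 1 := by
  refine le_antisymm ?_ ?_
  · rw [proj, vecMulVec_eq (Fin 1)]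
    exact (rank_mul_le_left _ _).trans ((rank_le_card_width _).trans (by simp))
  · rw [Matrix.rank]
    have hmem : u ∈ LinearMap.range (proj u).mulVecLin :=
      ⟨u, by rw [mulVecLin_apply, proj_mulVec, hu, one_smul]⟩
    have : LinearMap.range (proj u).mulVecLin ≠ ⊥ := by
      intro h
      rw [h] at hmem
      exact u_ne_zero hu (by simpa using hmem)
    have : Nontrivial (LinearMap.range (proj u).mulVecLin) :=
      Submodule.nontrivial_iff_ne_bot.mpr this
    exact Module.finrank_pos

lemma ref_det (u : Fin n → ℂ) (hu : star u ⬝ᵥ u = 1) : (ref u).det = -1 := by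
  have key : ref u = 1 + Matrix.replicateCol (Fin 1) ((-2 : ℂ) • u) * Matrix.replicateRow (Fin 1) (star u) := by
    erw [← vecMulVec_eq (Fin 1)]
    unfold ref proj
    ext i j
    simp [vecMulVec_apply, two_smul]
    ring
  rw [key]
  erw [Matrix.det_one_add_replicateCol_mul_replicateRow]
  rw [dotProduct_smul]
  rw [hu]
  norm_num


lemma dot_self_real (v : Fin n → ℂ) :
    star v ⬝ᵥ v = ((∑ i, Complex.normSq (v i) : ℝ) : ℂ) := by
  push_cast
  simp only [dotProduct, Pi.star_apply]
  exact Finset.sum_congr rfl fun i _ => (Complex.normSq_eq_conj_mul_self).symm ▸ rfl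

lemma dot_self_pos {v : Fin n → ℂ} (hv : v ≠ 0) :
    0 < ∑ i, Complex.normSq (v i) := by
  obtain ⟨i, hi⟩ := Function.ne_iff.mp hv
  exact Finset.sum_pos' (fun j _ => Complex.normSq_nonneg _)
    ⟨i, Finset.mem_univ i, by simpa using Complex.normSq_pos.mpr hi⟩

/-- normalisation: any nonzero vector has a positive real multiple that is a unit vector. -/
lemma exists_normalize {v : Fin n → ℂ} (hv : v ≠ 0) :
    ∃ c : ℝ, 0 < c ∧ star ((c:ℂ) • v) ⬝ᵥ ((c:ℂ) • v) = 1 := by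
  set s : ℝ := ∑ i, Complex.normSq (v i) with hs
  have hspos : 0 < s := dot_self_pos hv
  refine ⟨(Real.sqrt s)⁻¹, inv_pos.mpr (Real.sqrt_pos.mpr hspos), ?_⟩
  simp only [star_smul, smul_dotProduct, dotProduct_smul, dot_self_real, smul_eq_mul,
    Complex.star_def, Complex.conj_ofReal]
  norm_cast
  rw [← mul_assoc, ← mul_inv, Real.mul_self_sqrt hspos.le]
  exact inv_mul_cancel₀ hspos.ne'

/-- existence of a unit vector orthogonal to `x`, supported on indices `≥ k`. -/
lemma exists_perp (k : ℕ) (hk : k + 2 ≤ n) (x : Fin n → ℂ) (hx0 : x ≠ 0)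
    (hsupp : ∀ i : Fin n, (i : ℕ) < k → x i = 0) :
    ∃ u : Fin n → ℂ, star u ⬝ᵥ u = 1 ∧ star u ⬝ᵥ x = 0 ∧
      ∀ i : Fin n, (i : ℕ) < k → u i = 0 := by
  obtain ⟨a, ha⟩ := Function.ne_iff.mp hx0
  have hax : x a ≠ 0 := by simpa using ha
  have hak : k ≤ (a : ℕ) := by
    by_contra h
    exact hax (hsupp a (by omega))
  obtain ⟨b, hbk, habv⟩ : ∃ b : Fin n, k ≤ (b : ℕ) ∧ (a : ℕ) ≠ (b : ℕ) := by
    by_cases h : (a : ℕ) = k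
    · exact ⟨⟨k+1, by omega⟩, by show k ≤ k + 1; omega, by show (a:ℕ) ≠ k+1; omega⟩
    · exact ⟨⟨k, by omega⟩, by show k ≤ k; omega, by show (a:ℕ) ≠ k; omega⟩
  have hab : a ≠ b := fun h => habv (by rw [h])
  set w : Fin n → ℂ :=
    star (x b) • (Pi.single a 1 : Fin n → ℂ) - star (x a) • (Pi.single b 1 : Fin n → ℂ) with hw
  have hwb : w b = -star (x a) := by
    rw [hw]
    simp [Pi.single_eq_of_ne (Ne.symm hab)]
  have hw0 : w ≠ 0 := by
    intro h
    rw [h] at hwb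
    simp only [Pi.zero_apply] at hwb
    exact hax (by simpa using hwb.symm)
  have hwx : star w ⬝ᵥ x = 0 := by
    rw [hw, star_sub, star_smul, star_smul, star_single, star_single, sub_dotProduct,
      smul_dotProduct, smul_dotProduct, single_dotProduct, single_dotProduct]
    simp only [star_star, star_one, one_mul, smul_eq_mul]
    ring
  have hwsupp : ∀ i : Fin n, (i : ℕ) < k → w i = 0 := by
    intro i hi
    have hia : i ≠ a := fun h => by subst h; omega
    have hib : i ≠ b := fun h => by subst h; omega
    rw [hw]
    simp [Pi.single_eq_of_ne hia, Pi.single_eq_of_ne hib]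
  obtain ⟨c, hcpos, hcu⟩ := exists_normalize hw0
  refine ⟨(c:ℂ) • w, hcu, ?_, ?_⟩
  · rw [star_smul, smul_dotProduct, hwx, smul_zero]
  · intro i hi
    simp [hwsupp i hi]

/-- The main reflection lemma: a reflection carrying the unit vector `x` to the unit
vector `z`, assuming `⟪x, z⟫` is a real number `r < 1`; the axis is supported where
`x - z` is. -/
lemma dot_sub_sub (x z : Fin n → ℂ) (hx : star x ⬝ᵥ x = 1) (hz : star z ⬝ᵥ z = 1)
    (r : ℝ) (hxz : star x ⬝ᵥ z = (r : ℂ)) :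
    star (x - z) ⬝ᵥ (x - z) = ((2 - 2*r : ℝ) : ℂ) := by
  have hzx : star z ⬝ᵥ x = (r : ℂ) := by
    rw [star_dot, hxz]
    simp [Complex.ext_iff]
  rw [star_sub, sub_dotProduct, dotProduct_sub, dotProduct_sub, hx, hz, hxz, hzx]
  push_cast
  ring

lemma ref_maps (x z : Fin n → ℂ) (hx : star x ⬝ᵥ x = 1) (hz : star z ⬝ᵥ z = 1)
    (r : ℝ) (hxz : star x ⬝ᵥ z = (r : ℂ)) (hr : r < 1) :
    ∃ u : Fin n → ℂ, star u ⬝ᵥ u = 1 ∧ (ref u).mulVec x = z ∧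
      ∀ i : Fin n, x i = 0 → z i = 0 → u i = 0 := by
  have hzx : star z ⬝ᵥ x = (r : ℂ) := by
    rw [star_dot, hxz]
    simp [Complex.ext_iff]
  have hsub : star (x - z) ⬝ᵥ (x - z) = ((2 - 2*r : ℝ) : ℂ) :=
    dot_sub_sub x z hx hz r hxz
  have h2r : (0:ℝ) < 2 - 2*r := by linarith
  set c : ℝ := (Real.sqrt (2 - 2*r))⁻¹ with hc
  have hcpos : 0 < c := inv_pos.mpr (Real.sqrt_pos.mpr h2r)
  have hcsq : c * c * (2 - 2*r) = 1 := by
    rw [hc, ← mul_inv, Real.mul_self_sqrt h2r.le]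
    exact inv_mul_cancel₀ h2r.ne'
  set u : Fin n → ℂ := (c:ℂ) • (x - z) with hu
  have hstarc : star ((c:ℂ)) = (c:ℂ) := by simp [Complex.ext_iff]
  have huu : star u ⬝ᵥ u = 1 := by
    rw [hu, star_smul, smul_dotProduct, dotProduct_smul, hstarc, hsub, smul_eq_mul, smul_eq_mul]
    push_cast
    rw [← Complex.ofReal_one, ← hcsq]
    push_cast
    ring
  have hux : star u ⬝ᵥ x = ((c * (1 - r) : ℝ) : ℂ) := by
    rw [hu, star_smul, smul_dotProduct, hstarc, star_sub, sub_dotProduct, hx, hzx, smul_eq_mul]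
    push_cast
    ring
  refine ⟨u, huu, ?_, ?_⟩
  · rw [ref_mulVec, hux, hu]
    have hcoeff : (2 * ((c * (1 - r) : ℝ) : ℂ)) • ((c:ℂ) • (x - z)) = x - z := by
      rw [smul_smul, ← Complex.ofReal_ofNat, ← Complex.ofReal_mul, ← Complex.ofReal_mul]
      have : (2 : ℝ) * (c * (1 - r)) * c = c * c * (2 - 2*r) := by ring
      rw [this, hcsq, Complex.ofReal_one, one_smul]
    rw [hcoeff]
    abel
  · intro i hxi hzi
    rw [hu]
    simp [hxi, hzi]

/-- unitary matrices preserve the hermitian dot product. -/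
lemma unitary_dot {U : Matrix (Fin n) (Fin n) ℂ} (hU : U ∈ Matrix.unitaryGroup (Fin n) ℂ)
    (v w : Fin n → ℂ) : star (U.mulVec v) ⬝ᵥ (U.mulVec w) = star v ⬝ᵥ w := by
  rw [star_mulVec, dotProduct_mulVec, vecMul_vecMul]
  have : star v ᵥ* Uᴴ ᵥ* U = star v ᵥ* (Uᴴ * U) := (vecMul_vecMul _ _ _)
  have h1 : Uᴴ * U = 1 := Matrix.mem_unitaryGroup_iff'.mp hU
  rw [h1, vecMul_one]


/-- bundled reflection. -/
noncomputable def refU (u : Fin n → ℂ) (hu : star u ⬝ᵥ u = 1) :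
    Matrix.unitaryGroup (Fin n) ℂ := ⟨ref u, ref_mem u hu⟩

/-- A reflection through the hyperplane orthogonal to a unit vector. -/
def IsRef (S : Matrix.unitaryGroup (Fin n) ℂ) : Prop :=
  ∃ u : Fin n → ℂ, ∃ hu : star u ⬝ᵥ u = 1, S = refU u hu

lemma IsRef.simple {S : Matrix.unitaryGroup (Fin n) ℂ} (h : IsRef S) :
    IsSimpleSymmetry S := by
  obtain ⟨u, hu, rfl⟩ := h
  exact ⟨proj u, proj_herm u, proj_idem u hu, proj_rank u hu, rfl⟩

lemma IsRef.det {S : Matrix.unitaryGroup (Fin n) ℂ} (h : IsRef S) :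
    (S : Matrix (Fin n) (Fin n) ℂ).det = -1 := by
  obtain ⟨u, hu, rfl⟩ := h
  exact ref_det u hu

lemma IsRef.inv_eq {S : Matrix.unitaryGroup (Fin n) ℂ} (h : IsRef S) : S⁻¹ = S := by
  obtain ⟨u, hu, rfl⟩ := h
  have : refU u hu * refU u hu = 1 := by
    apply Subtype.ext
    show ref u * ref u = 1
    exact ref_mul_ref u hu
  exact inv_eq_of_mul_eq_one_right this

lemma det_list_prod (l : List (Matrix (Fin n) (Fin n) ℂ)) :
    l.prod.det = (l.map Matrix.det).prod := by
  induction l with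
  | nil => simp
  | cons a l ih => simp [Matrix.det_mul, ih]

lemma coe_list_prod (L : List (Matrix.unitaryGroup (Fin n) ℂ)) :
    ((L.prod : Matrix.unitaryGroup (Fin n) ℂ) : Matrix (Fin n) (Fin n) ℂ)
      = (L.map (Subtype.val : Matrix.unitaryGroup (Fin n) ℂ → Matrix (Fin n) (Fin n) ℂ)).prod := by
  induction L with
  | nil => simp
  | cons a l ih => simp [ih]


lemma aux (n : ℕ) (A : Matrix.unitaryGroup (Fin n) ℂ) :
    ∀ k : ℕ, k + 1 ≤ n →
    ∃ L : List (Matrix.unitaryGroup (Fin n) ℂ), L.length = 2 * k ∧ (∀ S ∈ L, IsRef S) ∧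
      ∀ i : Fin n, (i : ℕ) < k →
        ((L.prod * A : Matrix.unitaryGroup (Fin n) ℂ) : Matrix (Fin n) (Fin n) ℂ).mulVec
          (Pi.single i 1) = Pi.single i 1 := by
  intro k
  induction k with
  | zero => exact fun _ => ⟨[], rfl, by simp, fun i hi => absurd hi (by omega)⟩
  | succ k ih =>
    intro hk1
    obtain ⟨L, hlen, href, hfix⟩ := ih (by omega)
    set B := L.prod * A with hB
    set Bm : Matrix (Fin n) (Fin n) ℂ := (B : Matrix (Fin n) (Fin n) ℂ) with hBm
    have hBU : Bm ∈ Matrix.unitaryGroup (Fin n) ℂ := B.2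
    have hkn : k < n := by omega
    set kk : Fin n := ⟨k, hkn⟩ with hkk
    set y : Fin n → ℂ := Pi.single kk 1 with hy
    set x : Fin n → ℂ := Bm.mulVec y with hx
    have hsy : star y = y := by rw [hy, star_single]; simp
    have hyy : star y ⬝ᵥ y = 1 := by
      rw [hsy, hy, single_dotProduct, one_mul, Pi.single_eq_same]
    have hx1 : star x ⬝ᵥ x = 1 := by rw [hx, unitary_dot hBU, hyy]
    have hx0 : x ≠ 0 := fun h => by rw [h] at hx1; simp at hx1
    have hy0 : y ≠ 0 := fun h => by rw [h] at hyy; simp at hyy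
    have hysupp : ∀ i : Fin n, (i : ℕ) < k → y i = 0 := by
      intro i hi
      rw [hy]
      apply Pi.single_eq_of_ne
      intro h
      apply absurd hi
      simp [h, hkk]
    have hxsupp : ∀ i : Fin n, (i : ℕ) < k → x i = 0 := by
      intro i hi
      have h1 : (Pi.single i 1 : Fin n → ℂ) ⬝ᵥ x = x i := by rw [single_dotProduct, one_mul]
      have h2 : star (Pi.single i 1 : Fin n → ℂ) = Pi.single i 1 := by
        rw [star_single, star_one]
      have h3 : Bm.mulVec (Pi.single i 1) = Pi.single i 1 := hfix i hi
      calc x i = star (Pi.single i 1 : Fin n → ℂ) ⬝ᵥ x := by rw [h2, h1]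
        _ = star (Bm.mulVec (Pi.single i 1)) ⬝ᵥ (Bm.mulVec y) := by rw [h3, hx]
        _ = star (Pi.single i 1 : Fin n → ℂ) ⬝ᵥ y := unitary_dot hBU _ _
        _ = y i := by rw [h2, single_dotProduct, one_mul]
        _ = 0 := hysupp i hi
    obtain ⟨w, hw1, hwx, hwsupp⟩ := exists_perp k hk1 x hx0 hxsupp
    set t : ℂ := star w ⬝ᵥ y with ht
    set c : ℂ := if t = 0 then 1 else t / ((‖t‖ : ℝ) : ℂ) with hc
    have hcc : star c * c = 1 := by
      rw [hc]
      split
      · simp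
      · rename_i h
        have habs : (‖t‖ : ℝ) ≠ 0 := norm_ne_zero_iff.mpr h
        rw [Complex.star_def, ← Complex.normSq_eq_conj_mul_self, Complex.normSq_div,
          Complex.normSq_ofReal, ← Complex.sq_norm]
        rw [show ‖t‖ * ‖t‖ = ‖t‖^2 by ring]
        rw [div_self (by positivity)]
        norm_num
    set z : Fin n → ℂ := c • w with hz
    have hzz : star z ⬝ᵥ z = 1 := by
      rw [hz, star_smul, smul_dotProduct, dotProduct_smul, hw1, smul_eq_mul, smul_eq_mul,
        mul_one, hcc]
    have hz0 : z ≠ 0 := fun h => by rw [h] at hzz; simp at hzz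
    have hxw : star x ⬝ᵥ w = 0 := by
      rw [star_dot, hwx, star_zero]
    have hxz : star x ⬝ᵥ z = ((0:ℝ) : ℂ) := by
      rw [hz, dotProduct_smul, hxw, smul_zero, Complex.ofReal_zero]
    set r : ℝ := ‖t‖ with hr
    have hzy : star z ⬝ᵥ y = (r : ℝ) := by
      rw [hz, star_smul, smul_dotProduct, ← ht, smul_eq_mul, hc, hr]
      split
      · rename_i h; rw [h]; simp
      · rename_i h
        rw [Complex.star_def, map_div₀, Complex.conj_ofReal, div_mul_eq_mul_div,
          ← Complex.normSq_eq_conj_mul_self, ← Complex.sq_norm]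
        push_cast
        rw [sq, mul_div_assoc, div_self (by exact_mod_cast norm_ne_zero_iff.mpr h), mul_one]
    have hzsupp : ∀ i : Fin n, (i : ℕ) < k → z i = 0 := by
      intro i hi
      rw [hz, Pi.smul_apply, hwsupp i hi, smul_zero]
    -- first reflection : x ↦ z
    obtain ⟨u1, hu1, hu1map, hu1supp⟩ := ref_maps x z hx1 hzz 0 hxz (by norm_num)
    have hu1supp' : ∀ i : Fin n, (i : ℕ) < k → u1 i = 0 :=
      fun i hi => hu1supp i (hxsupp i hi) (hzsupp i hi)
    -- second reflection : z ↦ y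
    have hR2 : ∃ u2 : Fin n → ℂ, ∃ hu2 : star u2 ⬝ᵥ u2 = 1,
        (ref u2).mulVec z = y ∧ ∀ i : Fin n, (i : ℕ) < k → u2 i = 0 := by
      by_cases hzy2 : z = y
      · obtain ⟨u2, hu2, hu2y, hu2supp⟩ := exists_perp k hk1 y hy0 hysupp
        exact ⟨u2, hu2, by rw [hzy2]; exact ref_fix u2 y hu2y, hu2supp⟩
      · have hrlt : r < 1 := by
          have hsub := dot_sub_sub z y hzz hyy r hzy
          have hpos : 0 < ∑ i, Complex.normSq ((z - y) i) :=
            dot_self_pos (sub_ne_zero.mpr hzy2)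
          have h2 : ((2 - 2*r : ℝ) : ℂ) = ((∑ i, Complex.normSq ((z - y) i) : ℝ) : ℂ) := by
            rw [← hsub, dot_self_real]
          have h3 : (2 - 2*r : ℝ) = ∑ i, Complex.normSq ((z - y) i) := by
            exact_mod_cast h2
          linarith [h3 ▸ hpos]
        obtain ⟨u2, hu2, hu2map, hu2supp⟩ := ref_maps z y hzz hyy r hzy hrlt
        exact ⟨u2, hu2, hu2map,
          fun i hi => hu2supp i (hzsupp i hi) (hysupp i hi)⟩
    obtain ⟨u2, hu2, hu2map, hu2supp'⟩ := hR2
    refine ⟨refU u2 hu2 :: refU u1 hu1 :: L, ?_, ?_, ?_⟩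
    · simp [hlen]; omega
    · intro S hS
      simp only [List.mem_cons] at hS
      rcases hS with h | h | h
      · subst h; exact ⟨u2, hu2, rfl⟩
      · subst h; exact ⟨u1, hu1, rfl⟩
      · exact href S h
    · intro i hi
      have hprod : ((refU u2 hu2 :: refU u1 hu1 :: L).prod * A :
            Matrix.unitaryGroup (Fin n) ℂ)
          = refU u2 hu2 * (refU u1 hu1 * B) := by
        rw [hB, List.prod_cons, List.prod_cons, mul_assoc, mul_assoc]
      rw [hprod]
      have hcoe : ((refU u2 hu2 * (refU u1 hu1 * B) : Matrix.unitaryGroup (Fin n) ℂ) :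
            Matrix (Fin n) (Fin n) ℂ) = ref u2 * (ref u1 * Bm) := rfl
      rw [hcoe, ← Matrix.mulVec_mulVec, ← Matrix.mulVec_mulVec]
      rcases Nat.lt_succ_iff_lt_or_eq.mp hi with h | h
      · have hfu : ∀ (u : Fin n → ℂ), (∀ j : Fin n, (j : ℕ) < k → u j = 0) →
            (ref u).mulVec (Pi.single i 1) = Pi.single i 1 := by
          intro u hu
          apply ref_fix
          rw [dotProduct_single, Pi.star_apply, hu i h, star_zero, zero_mul]
        rw [hfix i h, hfu u1 hu1supp', hfu u2 hu2supp']
      · have : i = kk := Fin.ext h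
        subst this
        rw [← hy, ← hx, hu1map, hu2map, hy]


lemma main1 (n : ℕ) (hn : 2 ≤ n) (A : Matrix.unitaryGroup (Fin n) ℂ)
    (hA : (A : Matrix (Fin n) (Fin n) ℂ).det = 1) :
    ∃ (m : ℕ) (L : List (Matrix.unitaryGroup (Fin n) ℂ)),
      L.length = 2 * m ∧ (∀ S ∈ L, IsSimpleSymmetry S) ∧ L.prod = A := by
  obtain ⟨L, hlen, href, hfix⟩ := aux n A (n-1) (by omega)
  set B := L.prod * A with hB
  set Bm : Matrix (Fin n) (Fin n) ℂ := (B : Matrix (Fin n) (Fin n) ℂ) with hBm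
  have hBU : Bm ∈ Matrix.unitaryGroup (Fin n) ℂ := B.2
  set lst : Fin n := ⟨n-1, by omega⟩ with hlst
  -- determinant of B is 1
  have hdetL : ((L.prod : Matrix.unitaryGroup (Fin n) ℂ) : Matrix (Fin n) (Fin n) ℂ).det = 1 := by
    rw [coe_list_prod, det_list_prod, List.map_map]
    have : ∀ d ∈ L.map (Matrix.det ∘ Subtype.val), d = (-1 : ℂ) := by
      intro d hd
      obtain ⟨S, hS, rfl⟩ := List.mem_map.mp hd
      exact (href S hS).det
    rw [List.prod_eq_pow_card _ _ this, List.length_map, hlen, pow_mul]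
    norm_num
  have hdetB : Bm.det = 1 := by
    have hcoe : Bm = ((L.prod : Matrix.unitaryGroup (Fin n) ℂ) : Matrix (Fin n) (Fin n) ℂ)
        * (A : Matrix (Fin n) (Fin n) ℂ) := rfl
    rw [hcoe, Matrix.det_mul, hdetL, hA, one_mul]
  -- columns except the last
  have hcols : ∀ i : Fin n, (i : ℕ) < n - 1 → ∀ j : Fin n,
      Bm j i = if j = i then 1 else 0 := by
    intro i h j
    have h1 : (Bm.mulVec (Pi.single i 1)) j = (Pi.single i 1 : Fin n → ℂ) j :=
      congrFun (hfix i h) j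
    rw [Matrix.mulVec_single] at h1
    simpa [Pi.single_apply] using h1
  -- last column is zero off the diagonal
  have hlastcol : ∀ j : Fin n, j ≠ lst → Bm j lst = 0 := by
    intro j hj
    have hjlt : (j : ℕ) < n - 1 := by
      have h1 : (j : ℕ) < n := j.isLt
      have h2 : (j : ℕ) ≠ n - 1 := fun h => hj (Fin.ext (by simp [h, hlst]))
      omega
    have hBe : Bmᴴ * Bm = 1 := Matrix.mem_unitaryGroup_iff'.mp hBU
    have he : (Bmᴴ * Bm) j lst = (1 : Matrix (Fin n) (Fin n) ℂ) j lst := by rw [hBe]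
    rw [Matrix.mul_apply] at he
    have hsum : ∀ k : Fin n, Bmᴴ j k * Bm k lst = (if k = j then 1 else 0) * Bm k lst := by
      intro k
      rw [Matrix.conjTranspose_apply, hcols j hjlt k]
      split <;> simp
    rw [Finset.sum_congr rfl fun k _ => hsum k] at he
    simp only [ite_mul, one_mul, zero_mul, Finset.sum_ite_eq', Finset.mem_univ, if_true] at he
    rw [he, Matrix.one_apply_ne hj]
  -- B is diagonal
  have hdiag : Bm = Matrix.diagonal (fun i => if i = lst then Bm lst lst else 1) := by
    ext j i
    by_cases hi : i = lst
    · subst hi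
      by_cases hj : j = lst
      · subst hj; simp [Matrix.diagonal_apply]
      · rw [hlastcol j hj, Matrix.diagonal_apply_ne _ hj]
    · have hilt : (i : ℕ) < n - 1 := by
        have h1 : (i : ℕ) < n := i.isLt
        have h2 : (i : ℕ) ≠ n - 1 := fun h => hi (Fin.ext (by simp [h, hlst]))
        omega
      rw [hcols i hilt j, Matrix.diagonal_apply]
      by_cases hji : j = i
      · simp [hji, hi]
      · simp [hji]
  have hdet2 : Bm.det = Bm lst lst := by
    rw [hdiag, Matrix.det_diagonal]
    simp
  have hone : Bm lst lst = 1 := by rw [← hdet2, hdetB]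
  have hBone : Bm = 1 := by
    rw [hdiag, hone]
    simp
  have hB1 : L.prod * A = 1 := by
    rw [← hB]
    exact Subtype.ext hBone
  have hAinv : (L.prod)⁻¹ = A := inv_eq_of_mul_eq_one_right hB1
  refine ⟨n - 1, (L.map (fun S => S⁻¹)).reverse, ?_, ?_, ?_⟩
  · simp [hlen]
  · intro S hS
    simp only [List.mem_reverse, List.mem_map] at hS
    obtain ⟨T, hT, rfl⟩ := hS
    rw [(href T hT).inv_eq]
    exact (href T hT).simple
  · rw [← List.prod_inv_reverse]
    exact hAinv

end SS12

theorem stmt_12 (n : ℕ) (hn : 2 ≤ n) :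
    (∀ A : Matrix.unitaryGroup (Fin n) ℂ, (A : Matrix (Fin n) (Fin n) ℂ).det = 1 →
      ∃ (m : ℕ) (L : List (Matrix.unitaryGroup (Fin n) ℂ)),
        L.length = 2 * m ∧ (∀ S ∈ L, IsSimpleSymmetry S) ∧ L.prod = A) ∧
    (∀ χ : Matrix.unitaryGroup (Fin n) ℂ →* Circle, ∀ ε : Circle,
      (ε = 1 ∨ (ε : ℂ) = -1) →
      (∀ S : Matrix.unitaryGroup (Fin n) ℂ, IsSimpleSymmetry S → χ S = ε) →
      ∀ A : Matrix.unitaryGroup (Fin n) ℂ,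
        (A : Matrix (Fin n) (Fin n) ℂ).det = 1 → χ A = 1) := by
  constructor
  · exact fun A hA => SS12.main1 n hn A hA
  · intro χ ε hε hval A hA
    obtain ⟨m, L, hlen, hsimple, hprod⟩ := SS12.main1 n hn A hA
    have h1 : χ A = ε ^ (2 * m) := by
      rw [← hprod, map_list_prod]
      rw [List.prod_eq_pow_card (L.map χ) ε ?_]
      · rw [List.length_map, hlen]
      · intro x hx
        simp only [List.mem_map] at hx
        obtain ⟨S, hS, rfl⟩ := hx
        exact hval S (hsimple S hS)
    have hε2 : ε ^ 2 = 1 := by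
      rcases hε with h | h
      · rw [h, one_pow]
      · have : ((ε ^ 2 : Circle) : ℂ) = ((1 : Circle) : ℂ) := by
          rw [Circle.coe_pow, h]
          norm_num
        exact Subtype.ext (by exact_mod_cast this)
    rw [h1, pow_mul, hε2, one_pow]
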